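/- For every positive integer n, scc(G_n) ≤ 8n + 2. -/

import Mathlib

open Finset

/-- A clique covering of `G`: a finite family of cliques covering every edge. -/
def IsCliqueCover {V : Type*} (G : SimpleGraph V) (𝒞 : Finset (Finset V)) : Prop :=
  (∀ C ∈ 𝒞, G.IsClique (C : Set V)) ∧
  ∀ u v, G.Adj u v → ∃ C ∈ 𝒞, u ∈ C ∧ v ∈ C

/-- A clique partition of `G`: every edge lies in exactly one clique of the family. -/
def IsCliquePartition {V : Type*} (G : SimpleGraph V) (𝒞 : Finset (Finset V)) : Prop :=
  (∀ C ∈ 𝒞, G.IsClique (C : Set V)) ∧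
  ∀ u v, G.Adj u v → ∃! C, C ∈ 𝒞 ∧ u ∈ C ∧ v ∈ C

/-- The sigma clique cover number: minimum total size of cliques in a clique covering. -/
noncomputable def scc {V : Type*} (G : SimpleGraph V) : ℕ :=
  sInf {k | ∃ 𝒞, IsCliqueCover G 𝒞 ∧ ∑ C ∈ 𝒞, C.card = k}

/-- The sigma clique partition number: minimum total size of cliques in a clique partition. -/
noncomputable def scp {V : Type*} (G : SimpleGraph V) : ℕ :=
  sInf {k | ∃ 𝒞, IsCliquePartition G 𝒞 ∧ ∑ C ∈ 𝒞, C.card = k}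

/-- The clique cover number: minimum number of cliques in a clique covering. -/
noncomputable def cc {V : Type*} (G : SimpleGraph V) : ℕ :=
  sInf {k | ∃ 𝒞, IsCliqueCover G 𝒞 ∧ 𝒞.card = k}

/-- The clique partition number: minimum number of cliques in a clique partition. -/
noncomputable def cp {V : Type*} (G : SimpleGraph V) : ℕ :=
  sInf {k | ∃ 𝒞, IsCliquePartition G 𝒞 ∧ 𝒞.card = k}

/-- `scc'`: the minimum total size of cliques over clique coverings achieving `cc G`. -/
noncomputable def scc' {V : Type*} (G : SimpleGraph V) : ℕ :=
  sInf {k | ∃ 𝒞, IsCliqueCover G 𝒞 ∧ 𝒞.card = cc G ∧ ∑ C ∈ 𝒞, C.card = k}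
/-- The vertex set of the graph `Gₙ`: `x₀`, `y₀`, `X = {x i}`, `Y = {y i}`, `Z = {z i}`. -/
inductive Vtx (n : ℕ) : Type where
  | x0 : Vtx n
  | y0 : Vtx n
  | x : Fin n → Vtx n
  | y : Fin n → Vtx n
  | z : Fin n → Vtx n
  deriving DecidableEq, Fintype

/-- Membership in `X ∪ {x₀}`. -/
def inXx0 {n : ℕ} : Vtx n → Prop
  | .x0 => True
  | .x _ => True
  | _ => False

/-- Membership in `Y ∪ {y₀}`. -/
def inYy0 {n : ℕ} : Vtx n → Prop
  | .y0 => True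
  | .y _ => True
  | _ => False

/-- Membership in `Z`. -/
def inZ {n : ℕ} : Vtx n → Prop
  | .z _ => True
  | _ => False

/-- Membership in `X ∪ Y`. -/
def inXY {n : ℕ} : Vtx n → Prop
  | .x _ => True
  | .y _ => True
  | _ => False

/-- `xyPair u v` holds iff `u = x i` and `v = y i` for some `i`. -/
def xyPair {n : ℕ} : Vtx n → Vtx n → Prop
  | .x i, .y j => i = j
  | _, _ => False

/-- The graph `Gₙ`: `X ∪ {x₀}`, `Y ∪ {y₀}` and `Z` are cliques, every vertex of `Z` is
adjacent to every vertex of `X ∪ Y`, and `x i` is adjacent to `y j` iff `i = j`. -/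
def Gn (n : ℕ) : SimpleGraph (Vtx n) where
  Adj u v := u ≠ v ∧ (inXx0 u ∧ inXx0 v ∨ inYy0 u ∧ inYy0 v ∨ inZ u ∧ inZ v ∨
    inZ u ∧ inXY v ∨ inXY u ∧ inZ v ∨ xyPair u v ∨ xyPair v u)
  symm := by
    constructor
    rintro u v ⟨h1, h2⟩
    exact ⟨h1.symm, by tauto⟩
  loopless := ⟨fun u h => h.1 rfl⟩

section Aux
variable {n : ℕ}

def CX (n : ℕ) : Finset (Vtx n) := insert .x0 (Finset.univ.image .x)
def CY (n : ℕ) : Finset (Vtx n) := insert .y0 (Finset.univ.image .y)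
def CXZ (n : ℕ) : Finset (Vtx n) := (Finset.univ.image Vtx.x) ∪ (Finset.univ.image Vtx.z)
def CYZ (n : ℕ) : Finset (Vtx n) := (Finset.univ.image Vtx.y) ∪ (Finset.univ.image Vtx.z)
def Pr (n : ℕ) (i : Fin n) : Finset (Vtx n) := {.x i, .y i}

lemma memCX {u : Vtx n} : u ∈ CX n ↔ u = .x0 ∨ ∃ i, u = .x i := by
  simp [CX, eq_comm]
lemma memCY {u : Vtx n} : u ∈ CY n ↔ u = .y0 ∨ ∃ i, u = .y i := by
  simp [CY, eq_comm]
lemma memCXZ {u : Vtx n} : u ∈ CXZ n ↔ (∃ i, u = .x i) ∨ ∃ i, u = .z i := by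
  simp [CXZ, eq_comm]
lemma memCYZ {u : Vtx n} : u ∈ CYZ n ↔ (∃ i, u = .y i) ∨ ∃ i, u = .z i := by
  simp [CYZ, eq_comm]

lemma cliqueCX : (Gn n).IsClique (CX n : Set (Vtx n)) := by
  intro u hu v hv hne
  simp only [Finset.mem_coe, memCX] at hu hv
  refine ⟨hne, Or.inl ⟨?_, ?_⟩⟩
  · rcases hu with rfl | ⟨i, rfl⟩ <;> trivial
  · rcases hv with rfl | ⟨i, rfl⟩ <;> trivial

lemma cliqueCY : (Gn n).IsClique (CY n : Set (Vtx n)) := by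
  intro u hu v hv hne
  simp only [Finset.mem_coe, memCY] at hu hv
  refine ⟨hne, Or.inr (Or.inl ⟨?_, ?_⟩)⟩
  · rcases hu with rfl | ⟨i, rfl⟩ <;> trivial
  · rcases hv with rfl | ⟨i, rfl⟩ <;> trivial

lemma cliqueCXZ : (Gn n).IsClique (CXZ n : Set (Vtx n)) := by
  intro u hu v hv hne
  simp only [Finset.mem_coe, memCXZ] at hu hv
  refine ⟨hne, ?_⟩
  rcases hu with ⟨i, rfl⟩ | ⟨i, rfl⟩ <;> rcases hv with ⟨j, rfl⟩ | ⟨j, rfl⟩ <;>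
    simp [inXx0, inYy0, inZ, inXY, xyPair]

lemma cliqueCYZ : (Gn n).IsClique (CYZ n : Set (Vtx n)) := by
  intro u hu v hv hne
  simp only [Finset.mem_coe, memCYZ] at hu hv
  refine ⟨hne, ?_⟩
  rcases hu with ⟨i, rfl⟩ | ⟨i, rfl⟩ <;> rcases hv with ⟨j, rfl⟩ | ⟨j, rfl⟩ <;>
    simp [inXx0, inYy0, inZ, inXY, xyPair]

lemma cliquePr (i : Fin n) : (Gn n).IsClique (Pr n i : Set (Vtx n)) := by
  intro u hu v hv hne
  refine ⟨hne, ?_⟩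
  simp only [Pr, Finset.coe_insert, Set.mem_insert_iff, Finset.coe_singleton,
    Set.mem_singleton_iff] at hu hv
  rcases hu with rfl | rfl <;> rcases hv with rfl | rfl <;>
    simp_all [inXx0, inYy0, inZ, inXY, xyPair]

lemma sum_insert_le' {α : Type*} [DecidableEq α] (f : α → ℕ) (a : α) (s : Finset α) :
    ∑ x ∈ insert a s, f x ≤ f a + ∑ x ∈ s, f x := by
  by_cases h : a ∈ s
  · rw [Finset.insert_eq_self.2 h]; exact Nat.le_add_left _ _
  · rw [Finset.sum_insert h]

lemma sum_image_le' {α β : Type*} [DecidableEq β] (g : α → β) (s : Finset α) (f : β → ℕ) :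
    ∑ b ∈ s.image g, f b ≤ ∑ a ∈ s, f (g a) := by
  classical
  induction s using Finset.cons_induction with
  | empty => simp
  | cons a s ha ih =>
    rw [Finset.cons_eq_insert, Finset.image_insert, Finset.sum_insert ha]
    exact (sum_insert_le' _ _ _).trans (Nat.add_le_add_left ih _)

lemma memCX_of {u : Vtx n} (h : inXx0 u) : u ∈ CX n := by
  cases u <;> simp_all [inXx0, memCX]
lemma memCY_of {u : Vtx n} (h : inYy0 u) : u ∈ CY n := by
  cases u <;> simp_all [inYy0, memCY]
lemma memCXZ_ofZ {u : Vtx n} (h : inZ u) : u ∈ CXZ n := by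
  cases u <;> simp_all [inZ, memCXZ]
lemma memCYZ_ofZ {u : Vtx n} (h : inZ u) : u ∈ CYZ n := by
  cases u <;> simp_all [inZ, memCYZ]

end Aux

/-- For every positive integer `n`, `scc(Gₙ) ≤ 8n + 2`. -/
theorem stmt_4 (n : ℕ) (hn : 1 ≤ n) : scc (Gn n) ≤ 8 * n + 2 := by
  classical
  set P : Finset (Finset (Vtx n)) := Finset.univ.image (Pr n) with hP
  set 𝒞 : Finset (Finset (Vtx n)) :=
    insert (CX n) (insert (CY n) (insert (CXZ n) (insert (CYZ n) P))) with hC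
  have h1 : CX n ∈ 𝒞 := Finset.mem_insert_self _ _
  have h2 : CY n ∈ 𝒞 := Finset.mem_insert_of_mem (Finset.mem_insert_self _ _)
  have h3 : CXZ n ∈ 𝒞 :=
    Finset.mem_insert_of_mem (Finset.mem_insert_of_mem (Finset.mem_insert_self _ _))
  have h4 : CYZ n ∈ 𝒞 := Finset.mem_insert_of_mem (Finset.mem_insert_of_mem
    (Finset.mem_insert_of_mem (Finset.mem_insert_self _ _)))
  have h5 : ∀ i, Pr n i ∈ 𝒞 := fun i => Finset.mem_insert_of_mem (Finset.mem_insert_of_mem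
    (Finset.mem_insert_of_mem (Finset.mem_insert_of_mem
      (Finset.mem_image_of_mem _ (Finset.mem_univ i)))))
  have hcover : IsCliqueCover (Gn n) 𝒞 := by
    constructor
    · intro C hC'
      simp only [hC, hP, Finset.mem_insert, Finset.mem_image, Finset.mem_univ, true_and] at hC'
      rcases hC' with rfl | rfl | rfl | rfl | ⟨i, rfl⟩
      · exact cliqueCX
      · exact cliqueCY
      · exact cliqueCXZ
      · exact cliqueCYZ
      · exact cliquePr i
    · rintro u v ⟨hne, hor⟩
      rcases hor with ⟨ha, hb⟩ | ⟨ha, hb⟩ | ⟨ha, hb⟩ | ⟨ha, hb⟩ | ⟨ha, hb⟩ | hp | hp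
      · exact ⟨CX n, h1, memCX_of ha, memCX_of hb⟩
      · exact ⟨CY n, h2, memCY_of ha, memCY_of hb⟩
      · exact ⟨CXZ n, h3, memCXZ_ofZ ha, memCXZ_ofZ hb⟩
      · cases v with
        | x j => exact ⟨CXZ n, h3, memCXZ_ofZ ha, memCXZ.2 (Or.inl ⟨j, rfl⟩)⟩
        | y j => exact ⟨CYZ n, h4, memCYZ_ofZ ha, memCYZ.2 (Or.inl ⟨j, rfl⟩)⟩
        | _ => simp [inXY] at hb
      · cases u with
        | x j => exact ⟨CXZ n, h3, memCXZ.2 (Or.inl ⟨j, rfl⟩), memCXZ_ofZ hb⟩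
        | y j => exact ⟨CYZ n, h4, memCYZ.2 (Or.inl ⟨j, rfl⟩), memCYZ_ofZ hb⟩
        | _ => simp [inXY] at ha
      · cases u <;> cases v <;> simp only [xyPair] at hp <;>
          [skip] <;> first
          | exact absurd hp (by exact id)
          | skip
        case x.y i j =>
          subst hp
          exact ⟨Pr n i, h5 i, by simp [Pr], by simp [Pr]⟩
      · cases u <;> cases v <;> simp only [xyPair] at hp
        case y.x j i =>
          subst hp
          exact ⟨Pr n i, h5 i, by simp [Pr], by simp [Pr]⟩
  have hmem : (∑ C ∈ 𝒞, C.card) ∈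
      {k | ∃ 𝒞, IsCliqueCover (Gn n) 𝒞 ∧ ∑ C ∈ 𝒞, C.card = k} := ⟨𝒞, hcover, rfl⟩
  refine le_trans (Nat.sInf_le hmem) ?_
  have himx := Finset.card_image_le (s := (Finset.univ : Finset (Fin n))) (f := Vtx.x (n := n))
  have himy := Finset.card_image_le (s := (Finset.univ : Finset (Fin n))) (f := Vtx.y (n := n))
  have himz := Finset.card_image_le (s := (Finset.univ : Finset (Fin n))) (f := Vtx.z (n := n))
  simp only [Finset.card_univ, Fintype.card_fin] at himx himy himz
  have hcx : (CX n).card ≤ n + 1 :=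
    le_trans (Finset.card_insert_le _ _) (Nat.add_le_add_right himx 1)
  have hcy : (CY n).card ≤ n + 1 :=
    le_trans (Finset.card_insert_le _ _) (Nat.add_le_add_right himy 1)
  have hcxz : (CXZ n).card ≤ 2 * n := le_trans (Finset.card_union_le _ _) (by omega)
  have hcyz : (CYZ n).card ≤ 2 * n := le_trans (Finset.card_union_le _ _) (by omega)
  have hpr : ∑ C ∈ P, C.card ≤ 2 * n := by
    refine le_trans (sum_image_le' _ _ _) ?_
    calc ∑ i : Fin n, (Pr n i).card ≤ ∑ _i : Fin n, 2 :=
          Finset.sum_le_sum fun i _ => le_trans (Finset.card_insert_le _ _) (by simp)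
      _ = 2 * n := by simp [mul_comm]
  calc ∑ C ∈ 𝒞, C.card
      ≤ (CX n).card + ∑ C ∈ insert (CY n) (insert (CXZ n) (insert (CYZ n) P)), C.card :=
        sum_insert_le' _ _ _
    _ ≤ (CX n).card + ((CY n).card + ∑ C ∈ insert (CXZ n) (insert (CYZ n) P), C.card) :=
        Nat.add_le_add_left (sum_insert_le' _ _ _) _
    _ ≤ (CX n).card + ((CY n).card + ((CXZ n).card + ∑ C ∈ insert (CYZ n) P, C.card)) :=
        Nat.add_le_add_left (Nat.add_le_add_left (sum_insert_le' _ _ _) _) _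
    _ ≤ (CX n).card + ((CY n).card + ((CXZ n).card + ((CYZ n).card + ∑ C ∈ P, C.card))) :=
        Nat.add_le_add_left (Nat.add_le_add_left (Nat.add_le_add_left (sum_insert_le' _ _ _) _) _) _
    _ ≤ 8 * n + 2 := by omega
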